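/- arXiv:2104.12296 — 2 statements merged into one kernel-verified Lean document; each statement's English description precedes it below -/
import Mathlib

section
/- Let ε₁, ε₂, ε₃, η be real numbers with ε₁² + ε₂² + ε₃² + η² = 1 and (ε₁² + η²)(ε₂² + ε₃²) ≠ 0. Define γ = arctan2(½ − ε₂² − ε₃², √((ε₁² + η²)(ε₂² + ε₃²))) and ψ = arctan2(ε₁ε₂ + ε₃η, ε₁ε₃ − ε₂η). Then cos γ · sin ψ = 2(ε₁ε₂ + ε₃η), i.e., the longitude-rate expression (v/(r cos θ)) cos γ sin ψ in the geographic equations of motion coincides with the quaternion-form expression (2v/(r cos θ))(ε₁ε₂ + ε₃η). -/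
/-- The four-quadrant inverse tangent `arctan2 y x`, realized as the argument of the
complex number with real part `x` and imaginary part `y`; it satisfies
`sin (arctan2 y x) = y / √(x² + y²)` and `cos (arctan2 y x) = x / √(x² + y²)`
whenever `(x, y) ≠ (0, 0)`. -/
noncomputable def arctan2 (y x : ℝ) : ℝ := Complex.arg ⟨x, y⟩

lemma sin_arctan2 (y x : ℝ) :
    Real.sin (arctan2 y x) = y / Real.sqrt (x ^ 2 + y ^ 2) := by
  have := Complex.sin_arg (⟨x, y⟩ : ℂ)
  simpa [arctan2, Complex.norm_def, Complex.normSq_mk, sq] using this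

lemma cos_arctan2 (y x : ℝ) (h : (⟨x, y⟩ : ℂ) ≠ 0) :
    Real.cos (arctan2 y x) = x / Real.sqrt (x ^ 2 + y ^ 2) := by
  have := Complex.cos_arg h
  simpa [arctan2, Complex.norm_def, Complex.normSq_mk, sq] using this

/-- For unit Euler parameters with `(ε₁² + η²)(ε₂² + ε₃²) ≠ 0`, and with
`γ = arctan2(½ − ε₂² − ε₃², √((ε₁² + η²)(ε₂² + ε₃²)))` and
`ψ = arctan2(ε₁ε₂ + ε₃η, ε₁ε₃ − ε₂η)`, one has `cos γ · sin ψ = 2(ε₁ε₂ + ε₃η)`;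
hence the longitude-rate expression `(v/(r cos θ)) cos γ sin ψ` of the geographic
equations of motion coincides with the quaternion-form expression
`(2v/(r cos θ))(ε₁ε₂ + ε₃η)`. -/
theorem longitude_rate_geographic_eq_quaternion_form
    (ε₁ ε₂ ε₃ η : ℝ) (hunit : ε₁ ^ 2 + ε₂ ^ 2 + ε₃ ^ 2 + η ^ 2 = 1)
    (hne : (ε₁ ^ 2 + η ^ 2) * (ε₂ ^ 2 + ε₃ ^ 2) ≠ 0)
    (γ ψ : ℝ)
    (hγ : γ = arctan2 (1 / 2 - ε₂ ^ 2 - ε₃ ^ 2)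
        (Real.sqrt ((ε₁ ^ 2 + η ^ 2) * (ε₂ ^ 2 + ε₃ ^ 2))))
    (hψ : ψ = arctan2 (ε₁ * ε₂ + ε₃ * η) (ε₁ * ε₃ - ε₂ * η)) :
    Real.cos γ * Real.sin ψ = 2 * (ε₁ * ε₂ + ε₃ * η) ∧
    ∀ v r θ : ℝ,
      v / (r * Real.cos θ) * Real.cos γ * Real.sin ψ =
      2 * v / (r * Real.cos θ) * (ε₁ * ε₂ + ε₃ * η) := by
  set P : ℝ := (ε₁ ^ 2 + η ^ 2) * (ε₂ ^ 2 + ε₃ ^ 2) with hP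
  have hPpos : 0 < P := lt_of_le_of_ne (mul_nonneg (by positivity) (by positivity)) (Ne.symm hne)
  have hsqrtP : 0 < Real.sqrt P := Real.sqrt_pos.mpr hPpos
  -- the key identity
  have hkey : (ε₁ * ε₂ + ε₃ * η) ^ 2 + (ε₁ * ε₃ - ε₂ * η) ^ 2 = P := by ring
  -- x² + y² for γ equals 1/4
  have hxy : Real.sqrt P ^ 2 + (1 / 2 - ε₂ ^ 2 - ε₃ ^ 2) ^ 2 = (1 / 2) ^ 2 := by
    rw [Real.sq_sqrt hPpos.le]
    have h1 : ε₁ ^ 2 + η ^ 2 = 1 - (ε₂ ^ 2 + ε₃ ^ 2) := by linarith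
    rw [hP, h1]; ring
  have hcos : Real.cos γ = 2 * Real.sqrt P := by
    rw [hγ, cos_arctan2]
    · rw [hxy]
      rw [show ((1:ℝ)/2) ^ 2 = (1/2)*(1/2) by ring, Real.sqrt_mul_self (by norm_num)]
      ring
    · intro h
      have := congrArg Complex.re h
      simp at this
      exact hsqrtP.ne' this
  have hsin : Real.sin ψ = (ε₁ * ε₂ + ε₃ * η) / Real.sqrt P := by
    rw [hψ, sin_arctan2, show (ε₁ * ε₃ - ε₂ * η) ^ 2 + (ε₁ * ε₂ + ε₃ * η) ^ 2 = P by ring]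
  have hmain : Real.cos γ * Real.sin ψ = 2 * (ε₁ * ε₂ + ε₃ * η) := by
    rw [hcos, hsin]
    field_simp
  refine ⟨hmain, fun v r θ => ?_⟩
  rw [mul_assoc, hmain]
  ring
end

section
/- Let ε₁, ε₂, ε₃, η be real numbers with ε₁² + ε₂² + ε₃² + η² = 1 and (ε₁² + η²)(ε₂² + ε₃²) ≠ 0. Define γ = arctan2(½ − ε₂² − ε₃², √((ε₁² + η²)(ε₂² + ε₃²))) and ψ = arctan2(ε₁ε₂ + ε₃η, ε₁ε₃ − ε₂η). Then cos γ · cos ψ = 2(ε₁ε₃ − ε₂η), i.e., the latitude-rate expression (v/r) cos γ cos ψ in the geographic equations of motion coincides with the quaternion-form expression (2v/r)(ε₁ε₃ − ε₂η). -/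
/-- For unit Euler parameters with `(ε₁² + η²)(ε₂² + ε₃²) ≠ 0`, and with
`γ = arctan2(½ − ε₂² − ε₃², √((ε₁² + η²)(ε₂² + ε₃²)))` and
`ψ = arctan2(ε₁ε₂ + ε₃η, ε₁ε₃ − ε₂η)`, one has `cos γ · cos ψ = 2(ε₁ε₃ − ε₂η)`;
hence the latitude-rate expression `(v/r) cos γ cos ψ` of the geographic
equations of motion coincides with the quaternion-form expression
`(2v/r)(ε₁ε₃ − ε₂η)`. -/
theorem latitude_rate_geographic_eq_quaternion_form
    (ε₁ ε₂ ε₃ η : ℝ) (hunit : ε₁ ^ 2 + ε₂ ^ 2 + ε₃ ^ 2 + η ^ 2 = 1)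
    (hne : (ε₁ ^ 2 + η ^ 2) * (ε₂ ^ 2 + ε₃ ^ 2) ≠ 0)
    (γ ψ : ℝ)
    (hγ : γ = arctan2 (1 / 2 - ε₂ ^ 2 - ε₃ ^ 2)
        (Real.sqrt ((ε₁ ^ 2 + η ^ 2) * (ε₂ ^ 2 + ε₃ ^ 2))))
    (hψ : ψ = arctan2 (ε₁ * ε₂ + ε₃ * η) (ε₁ * ε₃ - ε₂ * η)) :
    Real.cos γ * Real.cos ψ = 2 * (ε₁ * ε₃ - ε₂ * η) ∧
    ∀ v r : ℝ,
      v / r * Real.cos γ * Real.cos ψ = 2 * v / r * (ε₁ * ε₃ - ε₂ * η) := by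
  have key : Real.cos γ * Real.cos ψ = 2 * (ε₁ * ε₃ - ε₂ * η) := by
    set P : ℝ := (ε₁ ^ 2 + η ^ 2) * (ε₂ ^ 2 + ε₃ ^ 2) with hPdef
    have hPpos : 0 < P := lt_of_le_of_ne (by positivity) (Ne.symm hne)
    have hsqrtP : 0 < Real.sqrt P := Real.sqrt_pos.mpr hPpos
    -- cos γ
    have hz1 : (⟨Real.sqrt P, 1 / 2 - ε₂ ^ 2 - ε₃ ^ 2⟩ : ℂ) ≠ 0 := by
      intro h
      have := congrArg Complex.re h
      simp at this
      exact hsqrtP.ne' this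
    have habs1 : ‖(⟨Real.sqrt P, 1 / 2 - ε₂ ^ 2 - ε₃ ^ 2⟩ : ℂ)‖ = 1 / 2 := by
      rw [Complex.norm_def, Complex.normSq_mk]
      have h1 : Real.sqrt P * Real.sqrt P = P := Real.mul_self_sqrt hPpos.le
      have : Real.sqrt P * Real.sqrt P +
          (1 / 2 - ε₂ ^ 2 - ε₃ ^ 2) * (1 / 2 - ε₂ ^ 2 - ε₃ ^ 2) = (1 / 2 : ℝ) ^ 2 := by
        rw [h1, hPdef]; nlinarith [hunit]
      rw [this, Real.sqrt_sq (by norm_num)]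
    have hcosγ : Real.cos γ = 2 * Real.sqrt P := by
      rw [hγ, arctan2, Complex.cos_arg hz1, habs1]
      simp
      ring
    -- cos ψ
    have hnsq : (ε₁ * ε₃ - ε₂ * η) * (ε₁ * ε₃ - ε₂ * η) +
        (ε₁ * ε₂ + ε₃ * η) * (ε₁ * ε₂ + ε₃ * η) = P := by
      rw [hPdef]; ring
    have hz2 : (⟨ε₁ * ε₃ - ε₂ * η, ε₁ * ε₂ + ε₃ * η⟩ : ℂ) ≠ 0 := by
      intro h
      have h1 := congrArg Complex.re h
      have h2 := congrArg Complex.im h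
      simp at h1 h2
      rw [h1, h2] at hnsq
      simp at hnsq
      exact hPpos.ne' hnsq.symm
    have habs2 : ‖(⟨ε₁ * ε₃ - ε₂ * η, ε₁ * ε₂ + ε₃ * η⟩ : ℂ)‖ = Real.sqrt P := by
      rw [Complex.norm_def, Complex.normSq_mk, hnsq]
    have hcosψ : Real.cos ψ = (ε₁ * ε₃ - ε₂ * η) / Real.sqrt P := by
      rw [hψ, arctan2, Complex.cos_arg hz2, habs2]
    rw [hcosγ, hcosψ]
    field_simp
  refine ⟨key, fun v r => ?_⟩
  have : v / r * Real.cos γ * Real.cos ψ = v / r * (Real.cos γ * Real.cos ψ) := by ring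
  rw [this, key]
  ring
end
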